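/- Let u : [0,T] → H²(ℝ) satisfy the conservation of mass I₁(t) = ∫u(t)² dx = I₁(0) and of energy I₂(t) = (1/6)∫u(t)³ dx + (1/2)∫(∂_x²u(t))² dx = I₂(0), with u(0) = u₀ ∈ H²(ℝ). Then there exists a constant C > 0, independent of u₀, T and t, such that ‖u(t)‖²_{H²} ≤ C(‖u₀‖²_{H²} + ‖u₀‖³_{H²} + ‖u₀‖⁴_{H²}) for all t ∈ [0,T]. -/

import Mathlib

open MeasureTheory Filter

/-- The squared `H²(ℝ)` norm of a Schwartz function. -/
noncomputable def H2sq (f : SchwartzMap ℝ ℝ) : ℝ :=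
  (∫ x : ℝ, (f x) ^ 2) + (∫ x : ℝ, (deriv f x) ^ 2) + ∫ x : ℝ, (iteratedDeriv 2 f x) ^ 2

namespace KdVAux
noncomputable abbrev D (f : SchwartzMap ℝ ℝ) : SchwartzMap ℝ ℝ := SchwartzMap.derivCLM ℝ ℝ f
lemma D_apply (f : SchwartzMap ℝ ℝ) (x : ℝ) : D f x = deriv f x := SchwartzMap.derivCLM_apply ..
lemma hasDerivAt (f : SchwartzMap ℝ ℝ) (x : ℝ) : HasDerivAt f (D f x) x := by
  rw [D_apply]; exact ((f.smooth 1).differentiable (by norm_num) x).hasDerivAt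
lemma mul_integrable (f g : SchwartzMap ℝ ℝ) : Integrable (fun x => f x * g x) :=
  g.integrable.bdd_mul f.continuous.aestronglyMeasurable (Eventually.of_forall (f.norm_le_seminorm ℝ))
lemma sq_integrable (f : SchwartzMap ℝ ℝ) : Integrable (fun x => f x ^ 2) := by
  simpa [pow_two] using mul_integrable f f

lemma iteratedDeriv_two (f : SchwartzMap ℝ ℝ) (x : ℝ) :
    iteratedDeriv 2 f x = D (D f) x := by
  have h1 : (deriv (f : ℝ → ℝ)) = (D f : ℝ → ℝ) := funext fun x => (D_apply f x).symm
  rw [show (2:ℕ) = 1 + 1 from rfl, iteratedDeriv_succ, iteratedDeriv_one, h1, D_apply]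

lemma integral_sq_nonneg (f : SchwartzMap ℝ ℝ) : 0 ≤ ∫ x : ℝ, f x ^ 2 :=
  integral_nonneg fun x => sq_nonneg _

/-- Integration by parts: `∫ f'² = -∫ f f''`. -/
lemma ibp (f : SchwartzMap ℝ ℝ) :
    (∫ x : ℝ, D f x * D f x) = - ∫ x : ℝ, f x * D (D f) x := by
  have := integral_mul_deriv_eq_deriv_mul_of_integrable
    (u := (f : ℝ → ℝ)) (u' := (D f : ℝ → ℝ)) (v := (D f : ℝ → ℝ)) (v' := (D (D f) : ℝ → ℝ))
    (fun x _ => hasDerivAt f x) (fun x _ => hasDerivAt (D f) x)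
    (mul_integrable f (D (D f))) (mul_integrable (D f) (D f)) (mul_integrable f (D f))
  rw [this]
  simp

lemma L1 (f : SchwartzMap ℝ ℝ) :
    (∫ x : ℝ, (deriv f x) ^ 2) ≤ (1/2) * ((∫ x : ℝ, f x ^ 2) + ∫ x : ℝ, (iteratedDeriv 2 f x) ^ 2) := by
  have h2 : (∫ x : ℝ, (iteratedDeriv 2 f x) ^ 2) = ∫ x : ℝ, (D (D f) x) ^ 2 := by
    congr 1; ext x; rw [iteratedDeriv_two]
  have h1 : (∫ x : ℝ, (deriv f x) ^ 2) = ∫ x : ℝ, D f x * D f x := by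
    congr 1; ext x; rw [← D_apply, pow_two]
  rw [h1, h2, ibp f]
  have hle : (∫ x : ℝ, f x * D (D f) x) ≥ - ((1/2) * ((∫ x : ℝ, f x ^ 2) + ∫ x : ℝ, (D (D f) x) ^ 2)) := by
    have : (∫ x : ℝ, -((1/2) * (f x ^ 2 + D (D f) x ^ 2))) ≤ ∫ x : ℝ, f x * D (D f) x := by
      apply integral_mono
      · exact (((sq_integrable f).add (sq_integrable (D (D f)))).const_mul _).neg
      · exact mul_integrable f (D (D f))
      · intro x
        nlinarith [sq_nonneg (f x + D (D f) x)]
    rw [integral_neg, MeasureTheory.integral_const_mul, integral_add (sq_integrable f) (sq_integrable (D (D f)))] at this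
    linarith
  linarith


lemma tendsto_sq_atTop (f : SchwartzMap ℝ ℝ) :
    Tendsto (fun y => f y ^ 2) atTop (nhds 0) := by
  have h : Tendsto f (Filter.cocompact ℝ) (nhds 0) := zero_at_infty f
  have h2 : Tendsto f atTop (nhds 0) := h.mono_left (by rw [cocompact_eq_atBot_atTop]; exact le_sup_right)
  simpa using h2.pow 2

/-- Pointwise bound: `f(x)² ≤ ∫ f² + ∫ f'²`. -/
lemma ptwise_sq_le (f : SchwartzMap ℝ ℝ) (x : ℝ) :
    f x ^ 2 ≤ (∫ y : ℝ, f y ^ 2) + ∫ y : ℝ, (deriv f y) ^ 2 := by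
  have hint : Integrable (fun y => 2 * (f y * D f y)) := (mul_integrable f (D f)).const_mul 2
  have key : (∫ y in Set.Ioi x, 2 * (f y * D f y)) = 0 - f x ^ 2 := by
    apply integral_Ioi_of_hasDerivAt_of_tendsto
      (f := fun y => f y ^ 2) (f' := fun y => 2 * (f y * D f y))
    · exact ((f.continuous.pow 2).continuousAt).continuousWithinAt
    · intro y _
      have := (hasDerivAt f y).fun_pow 2
      simpa [mul_comm, mul_assoc, mul_left_comm] using this
    · exact hint.integrableOn
    · exact tendsto_sq_atTop f
  have h1 : f x ^ 2 = - ∫ y in Set.Ioi x, 2 * (f y * D f y) := by linarith [key]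
  have h2 : (- ∫ y in Set.Ioi x, 2 * (f y * D f y)) ≤ ∫ y in Set.Ioi x, |2 * (f y * D f y)| := by
    have ha : (- ∫ y in Set.Ioi x, 2 * (f y * D f y)) ≤ |∫ y in Set.Ioi x, 2 * (f y * D f y)| := by
      have := le_abs_self (-(∫ y in Set.Ioi x, 2 * (f y * D f y))); rwa [abs_neg] at this
    have hb := norm_integral_le_integral_norm (μ := volume.restrict (Set.Ioi x)) (fun y => 2 * (f y * D f y))
    simp only [Real.norm_eq_abs] at hb
    exact ha.trans hb
  have h3 : (∫ y in Set.Ioi x, |2 * (f y * D f y)|) ≤ ∫ y : ℝ, |2 * (f y * D f y)| :=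
    setIntegral_le_integral hint.abs (Eventually.of_forall fun y => abs_nonneg _)
  have h4 : (∫ y : ℝ, |2 * (f y * D f y)|) ≤ ∫ y : ℝ, (f y ^ 2 + D f y ^ 2) := by
    apply integral_mono hint.abs ((sq_integrable f).add (sq_integrable (D f)))
    intro y
    show |2 * (f y * D f y)| ≤ f y ^ 2 + D f y ^ 2
    rw [abs_mul, abs_mul, abs_two]
    nlinarith [sq_nonneg (|f y| - |D f y|), abs_nonneg (f y), abs_nonneg (D f y), sq_abs (f y), sq_abs (D f y)]
  have h5 : (∫ y : ℝ, (f y ^ 2 + D f y ^ 2)) = (∫ y : ℝ, f y ^ 2) + ∫ y : ℝ, (deriv f y) ^ 2 := by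
    rw [integral_add (sq_integrable f) (sq_integrable (D f))]
    simp [D_apply]
  linarith

lemma cube_integrable (f : SchwartzMap ℝ ℝ) : Integrable (fun x => f x ^ 3) := by
  have : Integrable (fun x => f x * (f x * f x)) :=
    (mul_integrable f f).bdd_mul f.continuous.aestronglyMeasurable (Eventually.of_forall (f.norm_le_seminorm ℝ))
  simpa [pow_succ, pow_two, mul_assoc] using this

/-- `|∫ f³| ≤ √(∫f² + ∫f'²) · ∫f²`. -/
lemma L2 (f : SchwartzMap ℝ ℝ) :
    |∫ x : ℝ, f x ^ 3| ≤ Real.sqrt ((∫ x : ℝ, f x ^ 2) + ∫ x : ℝ, (deriv f x) ^ 2) * ∫ x : ℝ, f x ^ 2 := by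
  set S := (∫ x : ℝ, f x ^ 2) + ∫ x : ℝ, (deriv f x) ^ 2 with hS
  have habs : ∀ x, |f x| ≤ Real.sqrt S := fun x => Real.abs_le_sqrt (ptwise_sq_le f x)
  have h1 : |∫ x : ℝ, f x ^ 3| ≤ ∫ x : ℝ, |f x ^ 3| := by
    have := norm_integral_le_integral_norm (μ := volume) (fun x => f x ^ 3)
    simpa only [Real.norm_eq_abs] using this
  have h2 : (∫ x : ℝ, |f x ^ 3|) ≤ ∫ x : ℝ, Real.sqrt S * f x ^ 2 := by
    apply integral_mono (cube_integrable f).abs ((sq_integrable f).const_mul _)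
    intro x
    show |f x ^ 3| ≤ Real.sqrt S * f x ^ 2
    have h3 : |f x ^ 3| = |f x| * f x ^ 2 := by
      rw [pow_succ, abs_mul, abs_pow, sq_abs]; ring
    rw [h3]
    exact mul_le_mul_of_nonneg_right (habs x) (sq_nonneg _)
  rw [MeasureTheory.integral_const_mul] at h2
  linarith
end KdVAux

set_option maxHeartbeats 1000000 in
/-- If `u(t)` conserves mass `I₁` and energy `I₂ = (1/6)∫u³ + (1/2)∫(∂ₓ²u)²`, then
`‖u(t)‖²_{H²} ≤ C(‖u₀‖²_{H²} + ‖u₀‖³_{H²} + ‖u₀‖⁴_{H²})` with `C` independent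
of `u₀`, `T` and `t`. -/
theorem apriori_H2_fifth_kdv :
    ∃ C : ℝ, 0 < C ∧ ∀ (T : ℝ), 0 < T → ∀ (u₀ : SchwartzMap ℝ ℝ) (u : ℝ → SchwartzMap ℝ ℝ),
      u 0 = u₀ →
      (∀ t ∈ Set.Icc (0 : ℝ) T, (∫ x : ℝ, (u t x) ^ 2) = ∫ x : ℝ, (u₀ x) ^ 2) →
      (∀ t ∈ Set.Icc (0 : ℝ) T,
        (1 / 6) * (∫ x : ℝ, (u t x) ^ 3) + (1 / 2) * (∫ x : ℝ, (iteratedDeriv 2 (u t) x) ^ 2) =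
        (1 / 6) * (∫ x : ℝ, (u₀ x) ^ 3) + (1 / 2) * ∫ x : ℝ, (iteratedDeriv 2 u₀ x) ^ 2) →
      ∀ t ∈ Set.Icc (0 : ℝ) T,
        H2sq (u t) ≤
          C * (Real.sqrt (H2sq u₀) ^ 2 + Real.sqrt (H2sq u₀) ^ 3 + Real.sqrt (H2sq u₀) ^ 4) := by
  refine ⟨5, by norm_num, fun T _hT u₀ u _hu0 hmass henergy t ht => ?_⟩
  have hNabc : H2sq u₀ = (∫ x : ℝ, (u₀ x) ^ 2) + (∫ x : ℝ, (deriv u₀ x) ^ 2) + ∫ x : ℝ, (iteratedDeriv 2 u₀ x) ^ 2 := by unfold H2sq; rfl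
  have hH : H2sq (u t) = (∫ x : ℝ, (u t x) ^ 2) + (∫ x : ℝ, (deriv (u t) x) ^ 2) + ∫ x : ℝ, (iteratedDeriv 2 (u t) x) ^ 2 := by unfold H2sq; rfl
  set N := H2sq u₀ with hN_def
  set a := ∫ x : ℝ, (u t x) ^ 2 with ha_def
  set b := ∫ x : ℝ, (deriv (u t) x) ^ 2 with hb_def
  set c := ∫ x : ℝ, (iteratedDeriv 2 (u t) x) ^ 2 with hc_def
  set a₀ := ∫ x : ℝ, (u₀ x) ^ 2 with ha0_def
  set b₀ := ∫ x : ℝ, (deriv u₀ x) ^ 2 with hb0_def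
  set c₀ := ∫ x : ℝ, (iteratedDeriv 2 u₀ x) ^ 2 with hc0_def
  set J := ∫ x : ℝ, (u t x) ^ 3 with hJ_def
  set J₀ := ∫ x : ℝ, (u₀ x) ^ 3 with hJ0_def
  set s := Real.sqrt N with hs_def
  -- nonnegativity
  have ha : 0 ≤ a := integral_nonneg fun x => sq_nonneg _
  have hb0 : 0 ≤ b := integral_nonneg fun x => sq_nonneg _
  have hc0' : 0 ≤ c := integral_nonneg fun x => sq_nonneg _
  have ha₀ : 0 ≤ a₀ := integral_nonneg fun x => sq_nonneg _
  have hb₀ : 0 ≤ b₀ := integral_nonneg fun x => sq_nonneg _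
  have hc₀ : 0 ≤ c₀ := integral_nonneg fun x => sq_nonneg _
  have hN : 0 ≤ N := by rw [hNabc]; linarith
  have hs : 0 ≤ s := Real.sqrt_nonneg N
  have hs2 : s ^ 2 = N := Real.sq_sqrt hN
  -- conservation laws
  have hmass' : a = a₀ := hmass t ht
  have hen : (1/6 : ℝ) * J + (1/2) * c = (1/6) * J₀ + (1/2) * c₀ := henergy t ht
  -- interpolation for the middle term
  have hbL : b ≤ (1/2) * (a + c) := KdVAux.L1 (u t)
  have hb₀L : b₀ ≤ (1/2) * (a₀ + c₀) := KdVAux.L1 u₀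
  -- cubic term bounds
  have hJb : |J| ≤ Real.sqrt (a + b) * a := KdVAux.L2 (u t)
  have hJ₀b : |J₀| ≤ Real.sqrt (a₀ + b₀) * a₀ := KdVAux.L2 u₀
  have ha_le : a ≤ N := by rw [hNabc, hmass']; linarith
  have hc₀_le : c₀ ≤ N := by rw [hNabc]; linarith
  have hJ₀_le : |J₀| ≤ s * N := by
    have h1 : Real.sqrt (a₀ + b₀) ≤ s := Real.sqrt_le_sqrt (by rw [hNabc]; linarith)
    calc |J₀| ≤ Real.sqrt (a₀ + b₀) * a₀ := hJ₀b
      _ ≤ s * N := by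
          apply mul_le_mul h1 (by rw [hNabc]; linarith) ha₀ hs
  have hJ_le : |J| ≤ a ^ 2 / 4 + (a + b) := by
    have h1 : 0 ≤ a + b := by linarith
    nlinarith [Real.sq_sqrt h1, Real.sqrt_nonneg (a + b), sq_nonneg (Real.sqrt (a + b) - a / 2)]
  -- combine
  have hc_bound : c ≤ c₀ + (s * N + (a ^ 2 / 4 + (a + b))) / 3 := by
    have h1 : c = c₀ + (J₀ - J) / 3 := by linarith
    have h2 : J₀ ≤ |J₀| := le_abs_self _
    have h3 : -|J| ≤ J := neg_abs_le _
    linarith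
  have haN : a ^ 2 ≤ N ^ 2 := pow_le_pow_left₀ ha ha_le 2
  rw [hH]
  have hgoal : 5 * (s ^ 2 + s ^ 3 + s ^ 4) = 5 * (N + s * N + N ^ 2) := by
    rw [show s ^ 3 = s * s ^ 2 by ring, show s ^ 4 = (s ^ 2) ^ 2 by ring, hs2]
  rw [hgoal]
  have hsN : 0 ≤ s * N := mul_nonneg hs hN
  have hN2 : 0 ≤ N ^ 2 := sq_nonneg N
  have hc2 : c ≤ (9/5) * N + (2/5) * (s * N) + (1/10) * N ^ 2 := by
    linarith [hc_bound, haN, hbL, ha_le, hc₀_le]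
  linarith [hbL, ha_le, hc2, hsN, hN2, hN]
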